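/- With x = (2α-1)^{1/4} for α ∈ (1/2,1) and t ≥ 2, one has Ṽ_t^{(α)}(x) = -((x²-x+1)/(x²+x+1)) e^{tx}, and the function x ↦ -((x²-x+1)/(x²+x+1)) e^{tx} is decreasing on [0,1] when t ≥ 2; hence Ṽ_t^{(α)}((2α-1)^{1/4}) ≤ -1. -/

import Mathlib

lemma aux_deriv (t y : ℝ) :
    HasDerivAt (fun y : ℝ => -((y^2 - y + 1)/(y^2 + y + 1)) * Real.exp (t*y))
      (-(((2*y - 1)*(y^2 + y + 1) - (y^2 - y + 1)*(2*y + 1))/(y^2 + y + 1)^2) * Real.exp (t*y)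
        + -((y^2 - y + 1)/(y^2 + y + 1)) * (Real.exp (t*y) * t)) y := by
  have hD : (y^2 + y + 1) ≠ 0 := by nlinarith [sq_nonneg (2*y+1)]
  have h1 : HasDerivAt (fun y : ℝ => y^2 - y + 1) (2*y - 1) y := by
    have := ((hasDerivAt_pow 2 y).sub (hasDerivAt_id y)).add_const 1
    simpa using this
  have h2 : HasDerivAt (fun y : ℝ => y^2 + y + 1) (2*y + 1) y := by
    have := ((hasDerivAt_pow 2 y).add (hasDerivAt_id y)).add_const 1
    simpa using this
  have hq := (h1.div h2 hD).neg
  have he : HasDerivAt (fun y : ℝ => Real.exp (t*y)) (Real.exp (t*y) * t) y := by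
    have := ((hasDerivAt_id y).const_mul t).exp
    simpa using this
  exact (hq.mul he).congr_of_eventuallyEq (Filter.Eventually.of_forall fun z => by simp [neg_mul])

lemma aux_anti (t : ℝ) (ht : 2 ≤ t) :
    AntitoneOn (fun y : ℝ => -((y^2 - y + 1)/(y^2 + y + 1)) * Real.exp (t*y))
      (Set.Icc (0:ℝ) 1) := by
  apply antitoneOn_of_deriv_nonpos (convex_Icc 0 1)
  · exact fun y _ => (aux_deriv t y).differentiableAt.continuousAt.continuousWithinAt
  · exact fun y _ => (aux_deriv t y).differentiableAt.differentiableWithinAt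
  · intro y hy
    rw [interior_Icc] at hy
    obtain ⟨hy0, hy1⟩ := hy
    rw [(aux_deriv t y).deriv]
    have hDpos : (0:ℝ) < y^2 + y + 1 := by nlinarith
    have hE : (0:ℝ) < Real.exp (t*y) := Real.exp_pos _
    have key : (0:ℝ) ≤ (((2*y - 1)*(y^2 + y + 1) - (y^2 - y + 1)*(2*y + 1))
        + (y^2 - y + 1) * t * (y^2 + y + 1)) := by nlinarith [sq_nonneg y, sq_nonneg (y^2)]
    have heq : -(((2*y - 1)*(y^2 + y + 1) - (y^2 - y + 1)*(2*y + 1))/(y^2 + y + 1)^2) * Real.exp (t*y)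
        + -((y^2 - y + 1)/(y^2 + y + 1)) * (Real.exp (t*y) * t)
        = -(( ((2*y - 1)*(y^2 + y + 1) - (y^2 - y + 1)*(2*y + 1))
            + (y^2 - y + 1) * t * (y^2 + y + 1)) / (y^2 + y + 1)^2) * Real.exp (t*y) := by
      field_simp
      ring
    rw [heq]
    have : (0:ℝ) ≤ (((2*y - 1)*(y^2 + y + 1) - (y^2 - y + 1)*(2*y + 1))
        + (y^2 - y + 1) * t * (y^2 + y + 1)) / (y^2 + y + 1)^2 :=
      div_nonneg key (by positivity)
    nlinarith

/-- With `x = (2α-1)^{1/4}`, one has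
`Ṽ_t^{(α)}(x) = -((x²-x+1)/(x²+x+1)) e^{tx}`, the latter expression is
decreasing in `x` on `[0,1]` for `t ≥ 2`, and `Ṽ_t^{(α)}(x) ≤ -1`. -/
theorem stmt_16 (α t : ℝ) (hα : α ∈ Set.Ioo (1/2 : ℝ) 1) (ht : 2 ≤ t) :
    (let x : ℝ := (2*α - 1) ^ ((1:ℝ)/4);
     ((x - 1)*(x - 1 + 2*α)) / ((x + 1)*(x + 1 - 2*α)) * Real.exp (t*x)
        = -((x^2 - x + 1)/(x^2 + x + 1)) * Real.exp (t*x) ∧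
     AntitoneOn (fun y : ℝ => -((y^2 - y + 1)/(y^2 + y + 1)) * Real.exp (t*y))
        (Set.Icc (0:ℝ) 1) ∧
     ((x - 1)*(x - 1 + 2*α)) / ((x + 1)*(x + 1 - 2*α)) * Real.exp (t*x) ≤ -1) := by
  obtain ⟨hα1, hα2⟩ := hα
  intro x
  have hb0 : (0:ℝ) < 2*α - 1 := by linarith
  have hb1 : 2*α - 1 < 1 := by linarith
  have hx0 : 0 < x := Real.rpow_pos_of_pos hb0 _
  have hx1 : x < 1 := Real.rpow_lt_one hb0.le hb1 (by norm_num)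
  have hx4 : x^4 = 2*α - 1 := by
    rw [show x^4 = x ^ (4:ℕ) from rfl, ← Real.rpow_natCast x 4, ← Real.rpow_mul hb0.le]
    norm_num
  have h2α : 2*α = x^4 + 1 := by linarith
  have heq : ((x - 1)*(x - 1 + 2*α)) / ((x + 1)*(x + 1 - 2*α)) * Real.exp (t*x)
      = -((x^2 - x + 1)/(x^2 + x + 1)) * Real.exp (t*x) := by
    rw [h2α]
    have hd1 : x + 1 ≠ 0 := by linarith
    have h3 : x^3 < 1 := pow_lt_one₀ hx0.le hx1 (by norm_num)
    have h4 : x^4 < x := by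
      calc x^4 = x^3 * x := by ring
        _ < 1 * x := mul_lt_mul_of_pos_right h3 hx0
        _ = x := one_mul x
    have hd2 : x + 1 - (x^4 + 1) ≠ 0 := by nlinarith
    have hd3 : x^2 + x + 1 ≠ 0 := by nlinarith
    rw [mul_eq_mul_right_iff]
    left
    rw [show -((x^2 - x + 1)/(x^2 + x + 1)) = (-(x^2 - x + 1))/(x^2 + x + 1) from (neg_div _ _).symm,
      div_eq_div_iff (mul_ne_zero hd1 hd2) hd3]
    ring
  refine ⟨heq, aux_anti t ht, ?_⟩
  rw [heq]
  have h := aux_anti t ht (Set.mem_Icc.2 ⟨le_refl 0, by norm_num⟩)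
    (Set.mem_Icc.2 ⟨hx0.le, hx1.le⟩) hx0.le
  simpa using h
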